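/- Let G = (V,E) be a finite simple graph with |V| = n, let S ⊆ V be an independent set with |S| = k, let H be a real inner product space, and let x* : V → H be an optimal feasible C-SDP solution for G. Let E'' be a set of pairs (u,v) with u ∈ S, v ∈ V∖S such that {u,v} ∈ E for every (u,v) ∈ E''. Suppose B₁, B₂ ≥ 0 satisfy | k(n−k) − 2·|E''| | ≤ B₁ and | ∑_{(u,v) ∈ E''} ‖x*_u − x*_v‖² − (1/2)·∑_{(u,v) ∈ S × (V∖S)} ‖x*_u − x*_v‖² | ≤ B₂. Then ∑_{(u,v) ∈ S × S} ‖x*_u − x*_v‖² ≤ 4·(B₁ + B₂). -/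

import Mathlib

open Finset

/-- A feasible solution to the crude SDP: unit vectors, pairwise nonnegative inner
products, and orthogonal vectors on edges. -/
def Feasible {V : Type*} {H : Type*} [NormedAddCommGroup H] [InnerProductSpace ℝ H]
    (G : SimpleGraph V) (x : V → H) : Prop :=
  (∀ v, ‖x v‖ = 1) ∧ (∀ u v : V, (0 : ℝ) ≤ inner ℝ (x u) (x v)) ∧
    (∀ u v : V, G.Adj u v → (inner ℝ (x u) (x v) : ℝ) = 0)

/-- The crude SDP objective: the sum of squared distances over all ordered pairs. -/
noncomputable def obj {V : Type*} [Fintype V] {H : Type*} [NormedAddCommGroup H]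
    [InnerProductSpace ℝ H] (x : V → H) : ℝ :=
  ∑ u : V, ∑ v : V, ‖x u - x v‖ ^ 2

theorem stmt5 {V : Type*} [Fintype V] [DecidableEq V] (G : SimpleGraph V)
    {H : Type*} [NormedAddCommGroup H] [InnerProductSpace ℝ H]
    (n k : ℕ) (hn : Fintype.card V = n) (S : Finset V) (hk : S.card = k)
    (hind : ∀ u ∈ S, ∀ v ∈ S, ¬ G.Adj u v)
    (x : V → H) (hfeas : Feasible G x)
    (hopt : ∀ y : V → WithLp 2 (H × ℝ), Feasible G y → obj x ≤ obj y)
    (E'' : Finset (V × V))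
    (hE1 : ∀ p ∈ E'', p.1 ∈ S ∧ p.2 ∉ S)
    (hE2 : ∀ p ∈ E'', G.Adj p.1 p.2)
    (B₁ B₂ : ℝ) (hB₁ : 0 ≤ B₁) (hB₂ : 0 ≤ B₂)
    (h₁ : |(k : ℝ) * ((n : ℝ) - k) - 2 * (E''.card : ℝ)| ≤ B₁)
    (h₂ : |(∑ p ∈ E'', ‖x p.1 - x p.2‖ ^ 2) -
        (1 / 2) * ∑ u ∈ S, ∑ v ∈ Sᶜ, ‖x u - x v‖ ^ 2| ≤ B₂) :
    ∑ u ∈ S, ∑ v ∈ S, ‖x u - x v‖ ^ 2 ≤ 4 * (B₁ + B₂) := by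
  classical
  obtain ⟨hnorm, hpos, hedge⟩ := hfeas
  have hsq : ∀ u v : V, ‖x u - x v‖ ^ 2 = 2 - 2 * inner ℝ (x u) (x v) := by
    intro u v
    rw [norm_sub_sq_real, hnorm, hnorm]; ring
  set I : ℝ := ∑ u ∈ S, ∑ v ∈ Sᶜ, (inner ℝ (x u) (x v) : ℝ) with hI
  -- cardinality facts
  have hkn : k ≤ n := by
    rw [← hn, ← hk]; exact Finset.card_le_univ S
  have hcompl : ((Sᶜ : Finset V).card : ℝ) = (n : ℝ) - k := by
    rw [Finset.card_compl, hk, hn, Nat.cast_sub hkn]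
  -- the S×Sᶜ sum in terms of I
  have hcross : ∑ u ∈ S, ∑ v ∈ Sᶜ, ‖x u - x v‖ ^ 2
      = 2 * ((k : ℝ) * ((n : ℝ) - k)) - 2 * I := by
    have hrow : ∀ u ∈ S, ∑ v ∈ Sᶜ, ‖x u - x v‖ ^ 2
        = 2 * ((n : ℝ) - k) - 2 * ∑ v ∈ Sᶜ, (inner ℝ (x u) (x v) : ℝ) := by
      intro u _
      rw [Finset.sum_congr rfl fun v _ => hsq u v, Finset.sum_sub_distrib,
        Finset.sum_const, nsmul_eq_mul, hcompl, ← Finset.mul_sum]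
      ring
    rw [Finset.sum_congr rfl hrow, Finset.sum_sub_distrib, Finset.sum_const,
      nsmul_eq_mul, hk, ← Finset.mul_sum, ← hI]
    ring
  -- edge sum equals 2 * card
  have hEsum : ∑ p ∈ E'', ‖x p.1 - x p.2‖ ^ 2 = 2 * (E''.card : ℝ) := by
    have : ∀ p ∈ E'', ‖x p.1 - x p.2‖ ^ 2 = 2 := by
      intro p hp; rw [hsq, hedge _ _ (hE2 p hp)]; ring
    rw [Finset.sum_congr rfl this, Finset.sum_const, nsmul_eq_mul, mul_comm]
  -- I ≤ B₁ + B₂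
  have hIle : I ≤ B₁ + B₂ := by
    rw [hEsum, hcross] at h₂
    have : |I| ≤ B₁ + B₂ := by
      have habs := abs_add_le ((k : ℝ) * ((n : ℝ) - k) - 2 * (E''.card : ℝ))
        (2 * (E''.card : ℝ) - (1 / 2) * (2 * ((k : ℝ) * ((n : ℝ) - k)) - 2 * I))
      have heq : (k : ℝ) * ((n : ℝ) - k) - 2 * (E''.card : ℝ)
          + (2 * (E''.card : ℝ) - (1 / 2) * (2 * ((k : ℝ) * ((n : ℝ) - k)) - 2 * I)) = I := by
        ring
      rw [heq] at habs
      exact habs.trans (add_le_add h₁ h₂)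
    exact (le_abs_self I).trans this
  -- construct the modified solution
  set e : (H × ℝ) ≃ WithLp 2 (H × ℝ) := (WithLp.equiv 2 (H × ℝ)).symm with he
  set y : V → WithLp 2 (H × ℝ) := fun v => if v ∈ S then e (0, 1) else e (x v, 0) with hy
  have hyfeas : Feasible G y := by
    refine ⟨?_, ?_, ?_⟩
    · intro v
      by_cases hv : v ∈ S <;> simp [hy, he, hv, hnorm]
    · intro u v
      by_cases hu : u ∈ S <;> by_cases hv : v ∈ S <;>
        simp [hy, he, hu, hv, WithLp.prod_inner_apply, hpos]
    · intro u v huv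
      by_cases hu : u ∈ S <;> by_cases hv : v ∈ S <;>
        simp [hy, he, hu, hv, WithLp.prod_inner_apply, hedge u v huv]
      exact absurd huv (hind u hu v hv)
  have hobj := hopt y hyfeas
  -- compute obj y and obj x in blocks
  have split : ∀ f : V → ℝ, ∑ v : V, f v = ∑ v ∈ S, f v + ∑ v ∈ Sᶜ, f v :=
    fun f => (Finset.sum_add_sum_compl S f).symm
  have hySS : ∀ u ∈ S, ∀ v ∈ S, ‖y u - y v‖ ^ 2 = 0 := by
    intro u hu v hv
    simp [hy, hu, hv]
  have hySC : ∀ u ∈ S, ∀ v ∈ Sᶜ, ‖y u - y v‖ ^ 2 = 2 := by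
    intro u hu v hv
    rw [Finset.mem_compl] at hv
    rw [← real_inner_self_eq_norm_sq]
    simp [hy, he, hu, hv, WithLp.prod_inner_apply, real_inner_self_eq_norm_sq, hnorm, WithLp.prod_norm_sq_eq_of_L2]
    norm_num
  have hyCS : ∀ u ∈ Sᶜ, ∀ v ∈ S, ‖y u - y v‖ ^ 2 = 2 := by
    intro u hu v hv
    rw [Finset.mem_compl] at hu
    rw [← real_inner_self_eq_norm_sq]
    simp [hy, he, hu, hv, WithLp.prod_inner_apply, real_inner_self_eq_norm_sq, hnorm, WithLp.prod_norm_sq_eq_of_L2]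
    norm_num
  have hyCC : ∀ u ∈ Sᶜ, ∀ v ∈ Sᶜ, ‖y u - y v‖ ^ 2 = ‖x u - x v‖ ^ 2 := by
    intro u hu v hv
    rw [Finset.mem_compl] at hu hv
    rw [← real_inner_self_eq_norm_sq]
    simp [hy, he, hu, hv, WithLp.prod_inner_apply, real_inner_self_eq_norm_sq, WithLp.prod_norm_sq_eq_of_L2]
  have spl : ∀ f : V → V → ℝ, ∑ u : V, ∑ v : V, f u v
      = ∑ u ∈ S, ∑ v ∈ S, f u v + ∑ u ∈ S, ∑ v ∈ Sᶜ, f u v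
        + ∑ u ∈ Sᶜ, ∑ v ∈ S, f u v + ∑ u ∈ Sᶜ, ∑ v ∈ Sᶜ, f u v := by
    intro f
    rw [split (fun u => ∑ v : V, f u v),
      Finset.sum_congr rfl (fun u _ => split (f u)),
      Finset.sum_congr rfl (fun u _ => split (f u)),
      Finset.sum_add_distrib, Finset.sum_add_distrib]
    ring
  have hswap : ∑ u ∈ Sᶜ, ∑ v ∈ S, ‖x u - x v‖ ^ 2
      = ∑ u ∈ S, ∑ v ∈ Sᶜ, ‖x u - x v‖ ^ 2 := by
    rw [Finset.sum_comm]
    exact Finset.sum_congr rfl fun u _ => Finset.sum_congr rfl fun v _ => by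
      rw [norm_sub_rev]
  have hox : obj x = (∑ u ∈ S, ∑ v ∈ S, ‖x u - x v‖ ^ 2)
      + (2 * ((k : ℝ) * ((n : ℝ) - k)) - 2 * I)
      + (2 * ((k : ℝ) * ((n : ℝ) - k)) - 2 * I)
      + ∑ u ∈ Sᶜ, ∑ v ∈ Sᶜ, ‖x u - x v‖ ^ 2 := by
    unfold obj
    rw [spl, hswap, hcross]
  have hoy : obj y = 4 * ((k : ℝ) * ((n : ℝ) - k))
      + ∑ u ∈ Sᶜ, ∑ v ∈ Sᶜ, ‖x u - x v‖ ^ 2 := by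
    unfold obj
    rw [spl,
      Finset.sum_congr rfl (fun u hu => Finset.sum_congr rfl (fun v hv => hySS u hu v hv)),
      Finset.sum_congr rfl (fun u hu => Finset.sum_congr rfl (fun v hv => hySC u hu v hv)),
      Finset.sum_congr rfl (fun u hu => Finset.sum_congr rfl (fun v hv => hyCS u hu v hv)),
      Finset.sum_congr rfl (fun u hu => Finset.sum_congr rfl (fun v hv => hyCC u hu v hv))]
    simp only [Finset.sum_const_zero, Finset.sum_const, nsmul_eq_mul, smul_zero]
    rw [hcompl, show ((S.card : ℕ) : ℝ) = (k : ℝ) from by rw [hk]]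
    ring
  rw [hox, hoy] at hobj
  linarith
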